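/- Fix L, η, σ > 0 with Lη ≤ 1/2 and let k ≥ 2. Let x₀ be an integrable random initial point with E[x₀] ≤ 0, and define the SGD iterates x_{j+1} = x_j − η (g_L'(x_j) + z_j) on g_L, where z₀, …, z_{k−1} are i.i.d. uniform on {+σ, −σ} and independent of x₀. Then E[x_k] ≤ −ησ/48 if E[x₀] ≤ −ησ/48, and E[x_k] ≤ −ησ/4 + (1 − Lη)^{k/2}(E[x₀] + ησ/4) if −ησ/48 < E[x₀] ≤ 0. -/

import Mathlib

open MeasureTheory ProbabilityTheory

/-- The two-point noise distribution placing mass `1/2` on each of `σ` and `-σ`. -/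
noncomputable def twoPoint (σ : ℝ) : Measure ℝ :=
  (2⁻¹ : ENNReal) • Measure.dirac σ + (2⁻¹ : ENNReal) • Measure.dirac (-σ)

/-- The derivative of `g_L(x) = (L/2)x² + (L/2)[x]₊²`, namely `g_L'(x) = Lx + L[x]₊`. -/
noncomputable def gDeriv (L x : ℝ) : ℝ := L * x + L * max x 0

lemma my_integrable_dirac {f : ℝ → ℝ} (hf : Measurable f) (a : ℝ) :
    Integrable f (Measure.dirac a) :=
  ⟨hf.aestronglyMeasurable, by simp [HasFiniteIntegral, lintegral_dirac]⟩

lemma twoPoint_integrable (σ : ℝ) {f : ℝ → ℝ} (hf : Measurable f) :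
    Integrable f (twoPoint σ) :=
  ((my_integrable_dirac hf σ).smul_measure (by norm_num)).add_measure
    ((my_integrable_dirac hf (-σ)).smul_measure (by norm_num))

lemma twoPoint_integral (σ : ℝ) {f : ℝ → ℝ} (hf : Measurable f) :
    ∫ x, f x ∂(twoPoint σ) = (f σ + f (-σ)) / 2 := by
  rw [twoPoint, integral_add_measure
      ((my_integrable_dirac hf σ).smul_measure (by norm_num))
      ((my_integrable_dirac hf (-σ)).smul_measure (by norm_num)),
    integral_smul_measure, integral_smul_measure, integral_dirac, integral_dirac]
  simp
  ring


lemma drift_real (a c : ℝ) (m p : ℕ → ℝ) (ha0 : 0 < a) (ha2 : a ≤ 1 / 2) (hc0 : 0 < c)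
    (R1 : ∀ j, m (j + 1) = (1 - a) * m j - a * p j)
    (R2 : ∀ j, 0 ≤ p j)
    (R4 : ∀ j, (m (j + 1) + c) / 2 ≤ p (j + 1))
    (k : ℕ) (hk : 2 ≤ k) (hm0 : m 0 ≤ 0) :
    (m 0 ≤ -c / 48 → m k ≤ -c / 48) ∧
    (-c / 48 < m 0 → m k ≤ -c / 4 + (1 - a) ^ ((k : ℝ) / 2) * (m 0 + c / 4)) := by
  have D1 : ∀ j, m (j + 1) ≤ (1 - a) * m j := by
    intro j
    nlinarith [R1 j, mul_nonneg ha0.le (R2 j)]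
  have D2 : ∀ j, m (j + 2) ≤ (1 - 3 * a / 2) * m (j + 1) - a * c / 2 := by
    intro j
    have h1 := R1 (j + 1)
    have h2 := mul_le_mul_of_nonneg_left (R4 j) ha0.le
    nlinarith
  set s := Real.sqrt (1 - a) with hsdef
  have hs0 : 0 ≤ s := Real.sqrt_nonneg _
  have hs2 : s ^ 2 = 1 - a := Real.sq_sqrt (by linarith)
  have hs1 : 1 - 3 * a / 2 ≤ s :=
    (Real.le_sqrt (by linarith) (by linarith)).2 (by nlinarith)
  have hskpow : (1 - a) ^ ((k : ℝ) / 2) = s ^ k := by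
    rw [show ((k : ℝ) / 2) = (1 / 2) * (k : ℝ) by ring, Real.rpow_mul (by linarith),
      ← Real.sqrt_eq_rpow, Real.rpow_natCast]
  obtain ⟨i, rfl⟩ : ∃ i, k = i + 2 := ⟨k - 2, by omega⟩
  have hstep : ∀ u v : ℝ, u ≤ -((1 - a) * c) / 48 → v ≤ (1 - 3 * a / 2) * u - a * c / 2 →
      v ≤ -((1 - a) * c) / 48 := by
    intro u v hu hv
    have h3 := mul_le_mul_of_nonneg_left hu (show (0:ℝ) ≤ 1 - 3 * a / 2 by linarith)
    nlinarith [mul_pos ha0 hc0, mul_pos (mul_pos ha0 ha0) hc0]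
  have hfin : ∀ u v : ℝ, u ≤ -((1 - a) * c) / 48 → v ≤ (1 - 3 * a / 2) * u - a * c / 2 →
      v ≤ -c / 48 := by
    intro u v hu hv
    have h3 := mul_le_mul_of_nonneg_left hu (show (0:ℝ) ≤ 1 - 3 * a / 2 by linarith)
    nlinarith [mul_pos ha0 hc0, mul_pos (mul_pos ha0 ha0) hc0]
  constructor
  · intro h0
    have hA1 : ∀ j, 1 ≤ j → m j ≤ -((1 - a) * c) / 48 := by
      intro j hj
      induction j, hj using Nat.le_induction with
      | base =>
        have := D1 0
        nlinarith [mul_le_mul_of_nonneg_left h0 (show (0:ℝ) ≤ 1 - a by linarith)]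
      | succ n hn ih =>
        obtain ⟨i, rfl⟩ : ∃ i, n = i + 1 := ⟨n - 1, by omega⟩
        exact hstep _ _ ih (D2 i)
    exact hfin _ _ (hA1 (i + 1) (by omega)) (D2 i)
  · intro h0
    rw [hskpow]
    have hm0c : 0 ≤ m 0 + c / 4 := by linarith
    have hB1 : m 1 ≤ (1 - a) * m 0 := D1 0
    have hB1' : m 1 ≤ 0 := by
      have : (1 - a) * m 0 ≤ 0 := mul_nonpos_of_nonneg_of_nonpos (by linarith) hm0
      linarith
    have hB2 : m 2 ≤ -c / 4 + s ^ 2 * (m 0 + c / 4) := by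
      rw [hs2]
      have h2 := D2 0
      have h3 := mul_le_mul_of_nonneg_left hB1 (show (0:ℝ) ≤ 1 - 3 * a / 2 by linarith)
      nlinarith [mul_pos ha0 hc0, mul_pos (mul_pos ha0 ha0) hc0,
        mul_lt_mul_of_pos_left h0 (mul_pos (show (0:ℝ) < 3 * a / 2 by linarith)
          (show (0:ℝ) < 1 - a by linarith))]
    have hBind : ∀ j, m (j + 2) ≤ -c / 4 + s ^ (j + 2) * (m 0 + c / 4) := by
      intro j
      induction j with
      | zero => exact hB2
      | succ j ih =>
        show m (j + 3) ≤ -c / 4 + s ^ (j + 3) * (m 0 + c / 4)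
        have h2 := D2 (j + 1)
        have hac : 0 < a * c := mul_pos ha0 hc0
        by_cases hcase : 0 ≤ m (j + 2) + c / 4
        · have step1 : (1 - 3 * a / 2) * (m (j + 2) + c / 4) ≤ s * (m (j + 2) + c / 4) :=
            mul_le_mul_of_nonneg_right hs1 hcase
          have step2 : s * (m (j + 2) + c / 4) ≤ s * (s ^ (j + 2) * (m 0 + c / 4)) :=
            mul_le_mul_of_nonneg_left (by linarith) hs0
          have step3 : s * (s ^ (j + 2) * (m 0 + c / 4)) = s ^ (j + 3) * (m 0 + c / 4) := by
            ring
          have e1 : (1 - 3 * a / 2) * m (j + 2)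
              = (1 - 3 * a / 2) * (m (j + 2) + c / 4) - (1 - 3 * a / 2) * (c / 4) := by ring
          have e2 : (1 - 3 * a / 2) * (c / 4) = c / 4 - 3 * (a * c) / 8 := by ring
          linarith
        · push_neg at hcase
          have h3 : (1 - 3 * a / 2) * m (j + 2) ≤ (1 - 3 * a / 2) * (-c / 4) :=
            mul_le_mul_of_nonneg_left (by linarith) (by linarith)
          have e3 : (1 - 3 * a / 2) * (-c / 4) = -c / 4 + 3 * (a * c) / 8 := by ring
          have hpow : 0 ≤ s ^ (j + 3) * (m 0 + c / 4) :=
            mul_nonneg (pow_nonneg hs0 _) hm0c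
          linarith
    exact hBind i


/-- Fix `L, η, σ > 0` with `Lη ≤ 1/2` and `k ≥ 2`. Let `x₀` be an integrable
random initial point with `E[x₀] ≤ 0`, and let `X` be the SGD iterates on `g_L` with stepsize
`η` and i.i.d. noise `z₀, z₁, …` uniform on `{±σ}`, independent of `x₀`. Then
`E[x_k] ≤ −ησ/48` if `E[x₀] ≤ −ησ/48`, and
`E[x_k] ≤ −ησ/4 + (1 − Lη)^{k/2}(E[x₀] + ησ/4)` if `−ησ/48 < E[x₀] ≤ 0`. -/
theorem sgd_k_step_negative_drift
    (L η σ : ℝ) (hL : 0 < L) (hη : 0 < η) (hσ : 0 < σ) (hLη : L * η ≤ 1 / 2)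
    (k : ℕ) (hk : 2 ≤ k)
    (Ω : Type*) [MeasurableSpace Ω] (P : Measure Ω) [IsProbabilityMeasure P]
    (x0 : Ω → ℝ) (z : ℕ → Ω → ℝ)
    (hx0meas : Measurable x0) (hx0int : Integrable x0 P)
    (hx0mean : ∫ ω, x0 ω ∂P ≤ 0)
    (hzmeas : ∀ j, Measurable (z j))
    (hzlaw : ∀ j, Measure.map (z j) P = twoPoint σ)
    (hindep : iIndepFun (m := fun _ => inferInstance)
      (fun j : ℕ => Nat.casesOn (motive := fun _ => Ω → ℝ) j x0 z) P)
    (X : ℕ → Ω → ℝ)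
    (hX0 : ∀ ω, X 0 ω = x0 ω)
    (hXup : ∀ j ω, X (j + 1) ω = X j ω - η * (gDeriv L (X j ω) + z j ω)) :
    (∫ ω, x0 ω ∂P ≤ -(η * σ) / 48 → ∫ ω, X k ω ∂P ≤ -(η * σ) / 48) ∧
    (-(η * σ) / 48 < ∫ ω, x0 ω ∂P →
      ∫ ω, X k ω ∂P ≤ -(η * σ) / 4
        + (1 - L * η) ^ ((k : ℝ) / 2) * ((∫ ω, x0 ω ∂P) + η * σ / 4)) := by
  classical
  set f : ℕ → Ω → ℝ := fun j => Nat.casesOn (motive := fun _ => Ω → ℝ) j x0 z with hfdef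
  have hfmeas : ∀ i, Measurable (f i) := by rintro (_ | i); exacts [hx0meas, hzmeas i]
  -- integrability and integral of functions of the noise
  have hzint : ∀ (j : ℕ) (φ : ℝ → ℝ), Measurable φ → Integrable (fun ω => φ (z j ω)) P := by
    intro j φ hφ
    have h := twoPoint_integrable σ hφ
    rw [← hzlaw j] at h
    exact (integrable_map_measure hφ.aestronglyMeasurable (hzmeas j).aemeasurable).mp h
  have hzintegral : ∀ (j : ℕ) (φ : ℝ → ℝ), Measurable φ →
      ∫ ω, φ (z j ω) ∂P = (φ σ + φ (-σ)) / 2 := by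
    intro j φ hφ
    rw [← twoPoint_integral σ hφ, ← hzlaw j]
    exact (integral_map (hzmeas j).aemeasurable hφ.aestronglyMeasurable).symm
  have hzI : ∀ j : ℕ, Integrable (z j) P := fun j => hzint j id measurable_id
  have hz0 : ∀ j : ℕ, ∫ ω, z j ω ∂P = 0 := by
    intro j
    have := hzintegral j id measurable_id
    simpa using this
  -- measurability and integrability of the iterates
  have hgdm : Measurable (gDeriv L) := by
    show Measurable fun x : ℝ => L * x + L * max x 0
    fun_prop
  have hXmeas : ∀ j, Measurable (X j) := by
    intro j; induction j with
    | zero => rw [funext hX0]; exact hx0meas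
    | succ j ih =>
      rw [funext (hXup j)]
      exact ih.sub ((hgdm.comp ih |>.add (hzmeas j)).const_mul η)
  have hXint : ∀ j, Integrable (X j) P := by
    intro j; induction j with
    | zero => rw [funext hX0]; exact hx0int
    | succ j ih =>
      rw [funext (hXup j)]
      refine ih.sub (Integrable.const_mul ?_ η)
      have hg : Integrable (fun ω => gDeriv L (X j ω)) P := by
        simp only [gDeriv]
        exact (ih.const_mul L).add (ih.pos_part.const_mul L)
      exact hg.add (hzI j)
  have hXposint : ∀ j, Integrable (fun ω => max (X j ω) 0) P := fun j => (hXint j).pos_part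
  -- recurrence on the means
  have hrec : ∀ j, ∫ ω, X (j + 1) ω ∂P
      = (1 - L * η) * ∫ ω, X j ω ∂P - L * η * ∫ ω, max (X j ω) 0 ∂P := by
    intro j
    have h1 : (fun ω => X (j + 1) ω)
        = fun ω => (X j ω - η * L * X j ω - η * L * max (X j ω) 0) - η * z j ω := by
      funext ω; rw [hXup j ω]; simp only [gDeriv]; ring
    have i1 : Integrable (fun a => X j a - η * L * X j a) P :=
      (hXint j).sub ((hXint j).const_mul (η * L))
    have i2 : Integrable (fun a => X j a - η * L * X j a - η * L * max (X j a) 0) P :=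
      i1.sub ((hXposint j).const_mul (η * L))
    have i3 : Integrable (fun a => η * z j a) P := (hzI j).const_mul η
    rw [h1, integral_sub i2 i3, integral_sub i1 ((hXposint j).const_mul (η * L)),
      integral_sub (hXint j) ((hXint j).const_mul (η * L)),
      integral_const_mul, integral_const_mul, integral_const_mul, hz0 j]
    ring
  -- factorization of X i through the first coordinates
  have hfact : ∀ (j i : ℕ), i ≤ j →
      ∃ G : ({x // x ∈ Finset.range (j + 1)} → ℝ) → ℝ,
        Measurable G ∧ ∀ ω, X i ω = G (fun s => f s ω) := by
    intro j i
    induction i with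
    | zero =>
      intro _
      refine ⟨fun v => v ⟨0, Finset.mem_range.2 (Nat.succ_pos j)⟩, measurable_pi_apply _, ?_⟩
      intro ω; exact hX0 ω
    | succ i ih =>
      intro hij
      obtain ⟨G, hG, hGX⟩ := ih (by omega)
      refine ⟨fun v => G v - η * (gDeriv L (G v) + v ⟨i + 1, Finset.mem_range.2 (by omega)⟩),
        ?_, ?_⟩
      · exact hG.sub (((hgdm.comp hG).add (measurable_pi_apply _)).const_mul η)
      · intro ω
        rw [hXup i ω, hGX ω]
  have hindepXz : ∀ j : ℕ, IndepFun (X j) (z j) P := by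
    intro j
    obtain ⟨G, hG, hGX⟩ := hfact j j le_rfl
    have hdisj : Disjoint (Finset.range (j + 1)) ({j + 1} : Finset ℕ) := by
      simp
    have h := (hindep.indepFun_finset (Finset.range (j + 1)) {j + 1} hdisj hfmeas).comp hG
      (measurable_pi_apply (⟨j + 1, Finset.mem_singleton_self _⟩ :
        {x // x ∈ ({j + 1} : Finset ℕ)}))
    have e1 : X j = G ∘ (fun a (i : (Finset.range (j + 1) : Finset ℕ)) => f i a) :=
      funext fun ω => hGX ω
    have e2 : z j = (fun v : {x // x ∈ ({j + 1} : Finset ℕ)} → ℝ =>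
        v ⟨j + 1, Finset.mem_singleton_self _⟩) ∘ (fun a (i : ({j + 1} : Finset ℕ)) => f i a) :=
      rfl
    rw [e1, e2]
    exact h
  -- key inequality: E[max(X_{j+1},0)] ≥ (E[X_{j+1}] + ησ)/2
  have hkey : ∀ j : ℕ,
      (∫ ω, X (j + 1) ω ∂P + η * σ) / 2 ≤ ∫ ω, max (X (j + 1) ω) 0 ∂P := by
    intro j
    set φ : ℝ → ℝ := fun t => t - η * gDeriv L t + η * σ with hφdef
    set ψ : ℝ → ℝ := Set.indicator {-σ} (fun _ => (1 : ℝ)) with hψdef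
    have hφm : Measurable φ := (measurable_id.sub (hgdm.const_mul η)).add_const _
    have hψm : Measurable ψ := measurable_const.indicator (measurableSet_singleton _)
    have hIF : IndepFun (fun ω => φ (X j ω)) (fun ω => ψ (z j ω)) P :=
      (hindepXz j).comp hφm hψm
    have hWint : Integrable (fun ω => φ (X j ω)) P := by
      have : Integrable (fun ω => gDeriv L (X j ω)) P := by
        simp only [gDeriv]
        exact ((hXint j).const_mul L).add ((hXint j).pos_part.const_mul L)
      exact ((hXint j).sub (this.const_mul η)).add (integrable_const _)
    have hVint : Integrable (fun ω => ψ (z j ω)) P := hzint j ψ hψm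
    have hψbdd : ∀ t : ℝ, ‖ψ t‖ ≤ 1 := by
      intro t
      rw [hψdef]
      by_cases h : t ∈ ({-σ} : Set ℝ) <;> simp [Set.indicator_apply, h]
    have hWV : Integrable (fun ω => φ (X j ω) * ψ (z j ω)) P := by
      have h := Integrable.bdd_mul hWint ((hψm.comp (hzmeas j)).aestronglyMeasurable)
        (c := 1) (Filter.Eventually.of_forall fun ω => hψbdd (z j ω))
      exact h.congr (Filter.Eventually.of_forall fun ω => mul_comm _ _)
    have hpt : ∀ ω, φ (X j ω) * ψ (z j ω) ≤ max (X (j + 1) ω) 0 := by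
      intro ω
      by_cases h : z j ω = -σ
      · have hx : X (j + 1) ω = φ (X j ω) := by
          rw [hXup j ω, h, hφdef]; ring
        have hψ1 : ψ (z j ω) = 1 := by
          rw [hψdef, h]; simp [Set.indicator_apply]
        rw [hψ1, mul_one, hx]; exact le_max_left _ _
      · have hψ0 : ψ (z j ω) = 0 := by
          rw [hψdef]
          exact Set.indicator_of_notMem (by simpa using h) _
        rw [hψ0, mul_zero]; exact le_max_right _ _
    have hW : ∫ ω, φ (X j ω) ∂P = ∫ ω, X (j + 1) ω ∂P + η * σ := by
      have hWeq : (fun ω => φ (X j ω)) = fun ω => X (j + 1) ω + η * z j ω + η * σ := by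
        funext ω; rw [hXup j ω, hφdef]; ring
      have iA : Integrable (fun ω => X (j + 1) ω + η * z j ω) P :=
        (hXint (j + 1)).add ((hzI j).const_mul η)
      rw [hWeq, integral_add iA (integrable_const _),
        integral_add (hXint (j + 1)) ((hzI j).const_mul η), integral_const_mul, hz0 j,
        integral_const]
      simp
    have hV : ∫ ω, ψ (z j ω) ∂P = 1 / 2 := by
      rw [hzintegral j ψ hψm, hψdef]
      rw [Set.indicator_of_notMem (by simp; intro h; linarith) _]
      simp [Set.indicator_apply]
    have hmul : ∫ ω, φ (X j ω) * ψ (z j ω) ∂P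
        = (∫ ω, φ (X j ω) ∂P) * ∫ ω, ψ (z j ω) ∂P :=
      hIF.integral_fun_mul_eq_mul_integral hWint.aestronglyMeasurable hVint.aestronglyMeasurable
    have hle : ∫ ω, φ (X j ω) * ψ (z j ω) ∂P ≤ ∫ ω, max (X (j + 1) ω) 0 ∂P :=
      integral_mono hWV (hXposint (j + 1)) hpt
    rw [hmul, hW, hV] at hle
    linarith
  -- assemble
  have hm0eq : ∫ ω, x0 ω ∂P = ∫ ω, X 0 ω ∂P :=
    integral_congr_ae (Filter.Eventually.of_forall fun ω => (hX0 ω).symm)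
  rw [hm0eq]
  have hm0le : ∫ ω, X 0 ω ∂P ≤ 0 := by rw [← hm0eq]; exact hx0mean
  have := drift_real (L * η) (η * σ) (fun j => ∫ ω, X j ω ∂P)
    (fun j => ∫ ω, max (X j ω) 0 ∂P) (mul_pos hL hη) hLη (mul_pos hη hσ)
    hrec (fun j => integral_nonneg fun ω => le_max_right _ _) hkey k hk hm0le
  exact this
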